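/- Let $k$ be an algebraically closed field of characteristic $p \geq 3$. In the quotient ring $T = k[a,b,c,d]/(2c - a^p,\ 2d - b^p,\ a - c^p,\ b - d^p,\ (ad - bc)^{p-1} + 2)$, the images of $c$ and $d$ are units. -/

import Mathlib

open MvPolynomial

noncomputable def fiberIdeal11 (k : Type*) [Field k] (p : ℕ) :
    Ideal (MvPolynomial (Fin 4) k) :=
  Ideal.span {2 * X 2 - X 0 ^ p, 2 * X 3 - X 1 ^ p, X 0 - X 2 ^ p, X 1 - X 3 ^ p,
    (X 0 * X 3 - X 1 * X 2) ^ (p - 1) + 2}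

set_option maxHeartbeats 1600000 in
/-- In `T = k[a,b,c,d]/(2c - aᵖ, 2d - bᵖ, a - cᵖ, b - dᵖ, (ad-bc)^{p-1} + 2)`,
the images of `c` and `d` are units. -/
theorem stmt11 (k : Type*) [Field k] [IsAlgClosed k] (p : ℕ) (hp : p.Prime) (h3 : 3 ≤ p)
    [CharP k p] :
    IsUnit (Ideal.Quotient.mk (fiberIdeal11 k p) (X 2)) ∧
      IsUnit (Ideal.Quotient.mk (fiberIdeal11 k p) (X 3)) := by
  set f := Ideal.Quotient.mk (fiberIdeal11 k p) with hf
  have hmem : ∀ g ∈ ({2 * X 2 - X 0 ^ p, 2 * X 3 - X 1 ^ p, X 0 - X 2 ^ p, X 1 - X 3 ^ p,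
      (X 0 * X 3 - X 1 * X 2) ^ (p - 1) + 2} : Set (MvPolynomial (Fin 4) k)), f g = 0 := by
    intro g hg
    rw [hf, Ideal.Quotient.eq_zero_iff_mem, fiberIdeal11]
    exact Ideal.subset_span hg
  have ha : f (X 0) = f (X 2) ^ p := by
    have := hmem (X 0 - X 2 ^ p) (Set.mem_insert_iff.2 (Or.inr (Set.mem_insert_iff.2 (Or.inr (Set.mem_insert_iff.2 (Or.inl rfl))))))
    rw [map_sub, map_pow, sub_eq_zero] at this
    exact this
  have hb : f (X 1) = f (X 3) ^ p := by
    have := hmem (X 1 - X 3 ^ p) (Set.mem_insert_iff.2 (Or.inr (Set.mem_insert_iff.2 (Or.inr (Set.mem_insert_iff.2 (Or.inr (Set.mem_insert_iff.2 (Or.inl rfl))))))))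
    rw [map_sub, map_pow, sub_eq_zero] at this
    exact this
  have hu : (f (X 0) * f (X 3) - f (X 1) * f (X 2)) ^ (p - 1) = -2 := by
    have := hmem ((X 0 * X 3 - X 1 * X 2) ^ (p - 1) + 2) (Set.mem_insert_iff.2 (Or.inr (Set.mem_insert_iff.2 (Or.inr (Set.mem_insert_iff.2 (Or.inr (Set.mem_insert_iff.2 (Or.inr rfl))))))))
    rw [map_add, map_pow, map_sub, map_mul, map_mul, map_ofNat,
      add_eq_zero_iff_eq_neg] at this
    exact this
  have h2k : (-2 : k) ≠ 0 := by
    have : ((2 : ℕ) : k) ≠ 0 := by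
      rw [Ne, CharP.cast_eq_zero_iff k p]
      intro h
      have := Nat.le_of_dvd (by norm_num) h
      omega
    simpa using this
  have hU2 : IsUnit (-2 : MvPolynomial (Fin 4) k ⧸ fiberIdeal11 k p) := by
    have := (isUnit_iff_ne_zero.2 h2k).map (f.comp (C : k →+* MvPolynomial (Fin 4) k))
    rw [RingHom.comp_apply, map_neg, map_neg, map_ofNat, map_ofNat] at this
    exact this
  have huu : IsUnit (f (X 0) * f (X 3) - f (X 1) * f (X 2)) := by
    rw [← isUnit_pow_iff (a := f (X 0) * f (X 3) - f (X 1) * f (X 2)) (n := p - 1) (by omega),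
      hu]
    exact hU2
  have hp1 : p - 1 + 1 = p := by omega
  have hcp : ∀ x : MvPolynomial (Fin 4) k ⧸ fiberIdeal11 k p, x ^ p = x ^ (p - 1) * x := by
    intro x
    have := pow_succ x (p - 1)
    rw [hp1] at this
    exact this
  have hc : f (X 0) * f (X 3) - f (X 1) * f (X 2)
      = f (X 2) * (f (X 2) ^ (p - 1) * f (X 3) - f (X 3) ^ p) := by
    rw [ha, hb, hcp (f (X 2)), hcp (f (X 3))]; ring
  have hd : f (X 0) * f (X 3) - f (X 1) * f (X 2)
      = f (X 3) * (f (X 2) ^ p - f (X 3) ^ (p - 1) * f (X 2)) := by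
    rw [ha, hb, hcp (f (X 2)), hcp (f (X 3))]; ring
  have huc := huu
  rw [hc] at huc
  rw [hd] at huu
  exact ⟨isUnit_of_mul_isUnit_left huc, isUnit_of_mul_isUnit_left huu⟩
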